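/- Second moment method for total variation distance: let P_X, Q_X be probability distributions on a finite set 𝒳 and let X₁,…,Xₙ be drawn i.i.d. from P_X or from Q_X depending on a uniform binary hypothesis H. Then the total variation distance between the n-fold product distributions satisfies ‖P_X^{⊗n} − Q_X^{⊗n}‖_TV ≥ ‖P_X − Q_X‖₂² / (4 · Σ_{x∈𝒳} Var(P̂_{X₁ⁿ}(x))), where P̂_{X₁ⁿ}(x) = (1/n)Σᵢ 1{Xᵢ = x} is the empirical frequency of x, and the variance is taken under the mixture distribution (P_X^{⊗n} + Q_X^{⊗n})/2. -/

import Mathlib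

/-- `P` is a probability distribution on a finite set. -/
def IsProb {X : Type*} [Fintype X] (P : X → ℝ) : Prop :=
  (∀ x, 0 ≤ P x) ∧ ∑ x, P x = 1

/-- The n-fold product (i.i.d.) distribution. -/
def prodD {X : Type*} (P : X → ℝ) (n : ℕ) : (Fin n → X) → ℝ :=
  fun xs => ∏ i, P (xs i)

/-- Empirical frequency of the symbol `x` in the sequence `xs`. -/
noncomputable def empFreq {X : Type*} [DecidableEq X] {n : ℕ} (xs : Fin n → X) (x : X) : ℝ :=
  (1 / (n : ℝ)) * (Finset.univ.filter fun i => xs i = x).card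

/-- Expectation of `f` under the distribution `μ` on sequences. -/
def expect {X : Type*} [Fintype X] {n : ℕ} (μ : (Fin n → X) → ℝ)
    (f : (Fin n → X) → ℝ) : ℝ :=
  ∑ xs, μ xs * f xs

/-- Variance of `f` under the distribution `μ` on sequences. -/
def varOf {X : Type*} [Fintype X] {n : ℕ} (μ : (Fin n → X) → ℝ)
    (f : (Fin n → X) → ℝ) : ℝ :=
  expect μ (fun xs => f xs ^ 2) - (expect μ f) ^ 2

section helpers

variable {X : Type*} [Fintype X] [DecidableEq X] {n : ℕ}

lemma sum_pi (g : Fin n → X → ℝ) :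
    ∑ xs : Fin n → X, ∏ i, g i (xs i) = ∏ i, ∑ x, g i x := by
  rw [Finset.prod_univ_sum, Fintype.piFinset_univ]

lemma sum_prodD {P : X → ℝ} (hP : IsProb P) :
    ∑ xs : Fin n → X, prodD P n xs = 1 := by
  simp only [prodD]
  rw [sum_pi (fun _ => P)]
  simp [hP.2]

lemma prodD_nonneg {P : X → ℝ} (hP : IsProb P) (xs : Fin n → X) :
    0 ≤ prodD P n xs :=
  Finset.prod_nonneg fun i _ => hP.1 _

lemma marginal {P : X → ℝ} (hP : IsProb P) (i : Fin n) (x : X) :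
    ∑ xs : Fin n → X, prodD P n xs * (if xs i = x then (1:ℝ) else 0) = P x := by
  have h : ∀ xs : Fin n → X, prodD P n xs * (if xs i = x then (1:ℝ) else 0)
      = ∏ j, (fun j y => if j = i then (if y = x then P y else 0) else P y) j (xs j) := by
    intro xs
    simp only [prodD]
    by_cases hx : xs i = x
    · rw [if_pos hx, mul_one]
      refine Finset.prod_congr rfl fun j _ => ?_
      by_cases hj : j = i
      · subst hj; simp [hx]
      · simp [hj]
    · rw [if_neg hx, mul_zero]
      symm
      exact Finset.prod_eq_zero (Finset.mem_univ i) (by simp [hx])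
  have hsp := sum_pi (fun j y => if j = i then (if y = x then P y else 0) else P y)
  rw [Finset.sum_congr rfl (fun xs _ => h xs), hsp]
  have h2 : ∀ j : Fin n,
      (∑ y, (if j = i then (if y = x then P y else 0) else P y)) = if j = i then P x else 1 := by
    intro j
    by_cases hj : j = i
    · simp [hj]
    · simp [hj, hP.2]
  rw [Finset.prod_congr rfl (fun j _ => h2 j)]
  simp

lemma expect_empFreq {P : X → ℝ} (hP : IsProb P) (hn : 0 < n) (x : X) :
    expect (prodD P n) (fun xs => empFreq xs x) = P x := by
  have hcard : ∀ xs : Fin n → X, ((Finset.univ.filter fun i => xs i = x).card : ℝ)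
      = ∑ i : Fin n, (if xs i = x then (1:ℝ) else 0) := by
    intro xs
    rw [Finset.card_filter]
    push_cast
    rfl
  simp only [expect, empFreq]
  have : ∀ xs : Fin n → X, prodD P n xs * ((1 / (n:ℝ)) *
      ((Finset.univ.filter fun i => xs i = x).card : ℝ))
      = (1 / (n:ℝ)) * ∑ i : Fin n, prodD P n xs * (if xs i = x then (1:ℝ) else 0) := by
    intro xs
    rw [hcard xs]
    simp only [Finset.mul_sum]
    exact Finset.sum_congr rfl fun i _ => by ring
  rw [Finset.sum_congr rfl (fun xs _ => this xs), ← Finset.mul_sum, Finset.sum_comm]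
  rw [Finset.sum_congr rfl (fun i _ => marginal hP i x)]
  simp only [Finset.sum_const, Finset.card_univ, Fintype.card_fin, nsmul_eq_mul]
  field_simp

lemma varOf_rep (μ f : (Fin n → X) → ℝ) (hμ : ∑ xs, μ xs = 1) :
    ∑ xs, μ xs * (f xs - expect μ f)^2 = varOf μ f := by
  simp only [varOf, expect]
  set E := ∑ xs, μ xs * f xs with hE
  have h : ∀ xs : Fin n → X, μ xs * (f xs - E)^2
      = μ xs * f xs ^ 2 - 2 * E * (μ xs * f xs) + E^2 * μ xs := fun xs => by ring
  rw [Finset.sum_congr rfl fun xs _ => h xs, Finset.sum_add_distrib, Finset.sum_sub_distrib,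
    ← Finset.mul_sum, ← Finset.mul_sum, hμ, ← hE]
  ring

end helpers

theorem second_moment_method {X : Type*} [Fintype X] [DecidableEq X] {n : ℕ} (hn : 0 < n)
    (P Q : X → ℝ) (hP : IsProb P) (hQ : IsProb Q) :
    (∑ x, (P x - Q x) ^ 2) /
        (4 * ∑ x, varOf (fun xs => (prodD P n xs + prodD Q n xs) / 2)
          (fun xs => empFreq xs x)) ≤
      (1 / 2) * ∑ xs : Fin n → X, |prodD P n xs - prodD Q n xs| := by
  set μ : (Fin n → X) → ℝ := fun xs => (prodD P n xs + prodD Q n xs) / 2 with hμdef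
  set Δ : (Fin n → X) → ℝ := fun xs => prodD P n xs - prodD Q n xs with hΔdef
  set T : ℝ := ∑ xs : Fin n → X, |Δ xs| with hTdef
  have hμsum : ∑ xs, μ xs = 1 := by
    simp only [hμdef]
    rw [← Finset.sum_div, Finset.sum_add_distrib, sum_prodD hP, sum_prodD hQ]
    norm_num
  have hμnn : ∀ xs, 0 ≤ μ xs := fun xs =>
    div_nonneg (add_nonneg (prodD_nonneg hP xs) (prodD_nonneg hQ xs)) (by norm_num)
  have hT0 : 0 ≤ T := Finset.sum_nonneg fun xs _ => abs_nonneg _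
  have hΔle : ∀ xs, |Δ xs| ≤ 2 * μ xs := by
    intro xs
    have h1 := prodD_nonneg hP xs
    have h2 := prodD_nonneg hQ xs
    simp only [hΔdef, hμdef]
    rw [abs_le]
    constructor <;> [linarith; linarith]
  -- per-x key inequality
  have key : ∀ x : X, (P x - Q x)^2 ≤ T * (2 * varOf μ (fun xs => empFreq xs x)) := by
    intro x
    set f : (Fin n → X) → ℝ := fun xs => empFreq xs x with hfdef
    set m : ℝ := expect μ f with hmdef
    have hΔsum : ∑ xs, Δ xs = 0 := by
      simp only [hΔdef]
      rw [Finset.sum_sub_distrib, sum_prodD hP, sum_prodD hQ]; ring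
    have hΔf : ∑ xs, Δ xs * f xs = P x - Q x := by
      have : ∀ xs : Fin n → X, Δ xs * f xs = prodD P n xs * f xs - prodD Q n xs * f xs :=
        fun xs => by simp only [hΔdef]; ring
      rw [Finset.sum_congr rfl fun xs _ => this xs, Finset.sum_sub_distrib]
      have e1 : ∑ xs, prodD P n xs * f xs = P x := expect_empFreq hP hn x
      have e2 : ∑ xs, prodD Q n xs * f xs = Q x := expect_empFreq hQ hn x
      rw [e1, e2]
    have hdiff : P x - Q x = ∑ xs, Δ xs * (f xs - m) := by
      have : ∀ xs : Fin n → X, Δ xs * (f xs - m) = Δ xs * f xs - m * Δ xs := fun xs => by ring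
      rw [Finset.sum_congr rfl fun xs _ => this xs, Finset.sum_sub_distrib, hΔf,
        ← Finset.mul_sum, hΔsum, mul_zero, sub_zero]
    have habs : |P x - Q x| ≤ ∑ xs, |Δ xs| * |f xs - m| := by
      rw [hdiff]
      calc |∑ xs, Δ xs * (f xs - m)| ≤ ∑ xs, |Δ xs * (f xs - m)| :=
            Finset.abs_sum_le_sum_abs _ _
        _ = ∑ xs, |Δ xs| * |f xs - m| := by
            exact Finset.sum_congr rfl fun xs _ => abs_mul _ _
    have hCS : (∑ xs, |Δ xs| * |f xs - m|)^2 ≤ T * ∑ xs, |Δ xs| * (f xs - m)^2 := by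
      have := Finset.sum_mul_sq_le_sq_mul_sq Finset.univ
        (fun xs => Real.sqrt |Δ xs|) (fun xs => Real.sqrt |Δ xs| * |f xs - m|)
      have e1 : ∀ xs : Fin n → X,
          Real.sqrt |Δ xs| * (Real.sqrt |Δ xs| * |f xs - m|) = |Δ xs| * |f xs - m| := by
        intro xs
        rw [← mul_assoc, Real.mul_self_sqrt (abs_nonneg _)]
      have e2 : ∀ xs : Fin n → X, Real.sqrt |Δ xs| ^ 2 = |Δ xs| := fun xs =>
        Real.sq_sqrt (abs_nonneg _)
      have e3 : ∀ xs : Fin n → X,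
          (Real.sqrt |Δ xs| * |f xs - m|) ^ 2 = |Δ xs| * (f xs - m)^2 := by
        intro xs
        rw [mul_pow, Real.sq_sqrt (abs_nonneg _), sq_abs]
      rw [Finset.sum_congr rfl fun xs _ => e1 xs, Finset.sum_congr rfl fun xs _ => e2 xs,
        Finset.sum_congr rfl fun xs _ => e3 xs] at this
      exact this
    have hbound : ∑ xs, |Δ xs| * (f xs - m)^2 ≤ 2 * varOf μ f := by
      have step : ∑ xs, |Δ xs| * (f xs - m)^2 ≤ ∑ xs, 2 * μ xs * (f xs - m)^2 :=
        Finset.sum_le_sum fun xs _ =>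
          mul_le_mul_of_nonneg_right (hΔle xs) (sq_nonneg _)
      have : ∑ xs, 2 * μ xs * (f xs - m)^2 = 2 * ∑ xs, μ xs * (f xs - m)^2 := by
        rw [Finset.mul_sum]; exact Finset.sum_congr rfl fun xs _ => by ring
      rw [this, varOf_rep μ f hμsum] at step
      exact step
    calc (P x - Q x)^2 = |P x - Q x|^2 := (sq_abs _).symm
      _ ≤ (∑ xs, |Δ xs| * |f xs - m|)^2 := by
          apply pow_le_pow_left₀ (abs_nonneg _) habs
      _ ≤ T * ∑ xs, |Δ xs| * (f xs - m)^2 := hCS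
      _ ≤ T * (2 * varOf μ f) := mul_le_mul_of_nonneg_left hbound hT0
  -- variances are nonnegative
  have hVarnn : ∀ x : X, 0 ≤ varOf μ (fun xs => empFreq xs x) := by
    intro x
    rw [← varOf_rep μ _ hμsum]
    exact Finset.sum_nonneg fun xs _ => mul_nonneg (hμnn xs) (sq_nonneg _)
  set V : ℝ := ∑ x, varOf μ (fun xs => empFreq xs x) with hVdef
  have hV0 : 0 ≤ V := Finset.sum_nonneg fun x _ => hVarnn x
  have hSum : ∑ x, (P x - Q x)^2 ≤ T * (2 * V) := by
    calc ∑ x, (P x - Q x)^2 ≤ ∑ x, T * (2 * varOf μ (fun xs => empFreq xs x)) :=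
          Finset.sum_le_sum fun x _ => key x
      _ = T * (2 * V) := by
          rw [hVdef, Finset.mul_sum, Finset.mul_sum]
  rcases eq_or_lt_of_le hV0 with hV | hV
  · rw [← hV, mul_zero, div_zero]
    positivity
  · rw [div_le_iff₀ (by linarith : (0:ℝ) < 4 * V)]
    calc ∑ x, (P x - Q x)^2 ≤ T * (2 * V) := hSum
      _ = 1 / 2 * T * (4 * V) := by ring
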